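/- arXiv:2509.24040 — 2 statements merged into one kernel-verified Lean document; each statement's English description precedes it below -/
import Mathlib

section
/- The Demazure–Lusztig operator satisfies the quadratic Hecke relation (T_i − 1)(T_i + t) = 0: for every polynomial f in x_1,…,x_N over ℚ(t) and 1 ≤ i ≤ N−1, T_i(T_i(f)) − (1−t)·T_i(f) − t·f = 0. -/
noncomputable section

open MvPolynomial

/-- The coefficient field `ℚ(t)`. -/
abbrev Ft : Type := RatFunc ℚ

/-- The field of rational functions in `x_1, …, x_N` over `ℚ(t)`. -/
abbrev KK (N : ℕ) : Type := FractionRing (MvPolynomial (Fin N) Ft)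

/-- The parameter `t`. -/
def tp {N : ℕ} : KK N :=
  algebraMap (MvPolynomial (Fin N) Ft) (KK N) (C RatFunc.X)

/-- The variable `x_i`. -/
def XV {N : ℕ} (i : Fin N) : KK N :=
  algebraMap (MvPolynomial (Fin N) Ft) (KK N) (X i)

/-- The field endomorphism `s` exchanging the variables `x_i` and `x_j`. -/
def swapK {N : ℕ} (i j : Fin N) : KK N →+* KK N :=
  IsFractionRing.lift (g := (algebraMap (MvPolynomial (Fin N) Ft) (KK N)).comp
      (rename (Equiv.swap i j)).toRingHom)
    (by
      rw [RingHom.coe_comp]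
      exact (IsFractionRing.injective _ _).comp
        (rename_injective _ (Equiv.swap i j).injective))

/-- The Demazure–Lusztig operator
`T(f) = s(f) + (1-t) · x_i · (f - s(f)) / (x_i - x_j)` (for `j = i+1`). -/
def TT {N : ℕ} (i j : Fin N) (f : KK N) : KK N :=
  swapK i j f + (1 - tp) * XV i * (f - swapK i j f) / (XV i - XV j)

/-- The Demazure operator `π(f) = (x_i f - s(x_i f)) / (x_i - x_j)`. -/
def dem {N : ℕ} (i j : Fin N) (f : KK N) : KK N :=
  (XV i * f - swapK i j (XV i * f)) / (XV i - XV j)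

/-- The canonical image of a polynomial in the rational function field. -/
def toK {N : ℕ} (f : MvPolynomial (Fin N) Ft) : KK N :=
  algebraMap (MvPolynomial (Fin N) Ft) (KK N) f

lemma swapK_algebraMap {N : ℕ} (i j : Fin N) (p : MvPolynomial (Fin N) Ft) :
    swapK i j (algebraMap (MvPolynomial (Fin N) Ft) (KK N) p)
      = algebraMap (MvPolynomial (Fin N) Ft) (KK N) (rename (Equiv.swap i j) p) := by
  apply IsFractionRing.lift_algebraMap

lemma swapK_XV_left {N : ℕ} (i j : Fin N) : swapK i j (XV i) = XV j := by
  rw [XV, swapK_algebraMap]; simp [XV]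

lemma swapK_XV_right {N : ℕ} (i j : Fin N) : swapK i j (XV j) = XV i := by
  rw [XV, swapK_algebraMap]; simp [XV]

lemma swapK_tp {N : ℕ} (i j : Fin N) : swapK i j (tp : KK N) = tp := by
  rw [tp, swapK_algebraMap]; simp

lemma swapK_swapK {N : ℕ} (i j : Fin N) (x : KK N) : swapK i j (swapK i j x) = x := by
  have key : ∀ p : MvPolynomial (Fin N) Ft,
      rename (Equiv.swap i j) (rename (Equiv.swap i j) p) = p := by
    intro p
    rw [rename_rename]
    have h : ⇑(Equiv.swap i j) ∘ ⇑(Equiv.swap i j) = id := by ext x; simp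
    rw [h, rename_id, AlgHom.id_apply]
  obtain ⟨a, b, -, rfl⟩ := IsFractionRing.div_surjective (A := MvPolynomial (Fin N) Ft) x
  rw [map_div₀, map_div₀, swapK_algebraMap, swapK_algebraMap, swapK_algebraMap,
    swapK_algebraMap, key, key]

lemma XV_ne {N : ℕ} {i j : Fin N} (hij : i ≠ j) : (XV i : KK N) ≠ XV j := by
  intro h
  exact hij (MvPolynomial.X_injective
    (IsFractionRing.injective (MvPolynomial (Fin N) Ft) (KK N) h))

set_option synthInstance.maxHeartbeats 1000000 in
set_option maxHeartbeats 2000000 in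
lemma hecke_general {N : ℕ} (i j : Fin N) (hij : i ≠ j) (g : KK N) :
    TT i j (TT i j g) - (1 - tp) * TT i j g - tp * g = 0 := by
  have hne : XV i - XV j ≠ 0 := sub_ne_zero.mpr (XV_ne hij)
  have hne' : XV j - XV i ≠ 0 := sub_ne_zero.mpr (XV_ne hij.symm)
  simp only [TT, map_add, map_sub, map_mul, map_div₀, map_one, swapK_tp,
    swapK_XV_left, swapK_XV_right, swapK_swapK]
  simp only [show (XV j - XV i : KK N) = -(XV i - XV j) from by ring, div_neg]
  field_simp
  ring

/-- quadratic Hecke relation `(T_i - 1)(T_i + t) = 0`: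
for every polynomial `f` in `x_1, …, x_N` over `ℚ(t)`,
`T_i (T_i f) - (1-t) · T_i f - t · f = 0` (indices 0-based). -/
theorem heckeT_quadratic (N i : ℕ) (hi : i + 1 < N)
    (f : MvPolynomial (Fin N) Ft) :
    TT ⟨i, by omega⟩ ⟨i + 1, hi⟩ (TT ⟨i, by omega⟩ ⟨i + 1, hi⟩ (toK f)) -
        (1 - tp) * TT ⟨i, by omega⟩ ⟨i + 1, hi⟩ (toK f) - tp * toK f = 0 := by
  exact hecke_general _ _ (by simp [Fin.ext_iff]) (toK f)

end
end

section
/- The Demazure–Lusztig operators satisfy the braid relation: for every polynomial f in x_1,…,x_N over ℚ(t) and every 1 ≤ i ≤ N−2, T_i(T_{i+1}(T_i(f))) = T_{i+1}(T_i(T_{i+1}(f))). -/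
noncomputable section

open MvPolynomial

set_option maxHeartbeats 4000000 in
theorem braid_abs {K : Type*} [Field K] (s u : K →+* K)
 (x y z t g0 g1 g2 g12 g21 g121 : K)
 (hsx : s x = y) (hsy : s y = x) (hsz : s z = z) (hst : s t = t)
 (hux : u x = x) (huy : u y = z) (huz : u z = y) (hut : u t = t)
 (hs0 : s g0 = g1) (hs1 : s g1 = g0) (hs2 : s g2 = g12) (hs12 : s g12 = g2)
 (hs21 : s g21 = g121) (hs121 : s g121 = g21)
 (hu0 : u g0 = g2) (hu2 : u g2 = g0) (hu1 : u g1 = g21) (hu21 : u g21 = g1)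
 (hu12 : u g12 = g121) (hu121 : u g121 = g12)
 (hxy : x - y ≠ 0) (hyz : y - z ≠ 0) (hxz : x - z ≠ 0) :
 (fun f => s f + (1-t)*x*(f - s f)/(x-y))
   ((fun f => u f + (1-t)*y*(f - u f)/(y-z))
     ((fun f => s f + (1-t)*x*(f - s f)/(x-y)) g0)) =
 (fun f => u f + (1-t)*y*(f - u f)/(y-z))
   ((fun f => s f + (1-t)*x*(f - s f)/(x-y))
     ((fun f => u f + (1-t)*y*(f - u f)/(y-z)) g0)) := by
  have hyx : y - x ≠ 0 := by rw [show y - x = -(x-y) by ring, neg_ne_zero]; exact hxy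
  have hzy : z - y ≠ 0 := by rw [show z - y = -(y-z) by ring, neg_ne_zero]; exact hyz
  have hD : (x-y)*((x-z)*(y-z)) ≠ 0 := mul_ne_zero hxy (mul_ne_zero hxz hyz)
  simp only []
  have hA : s g0 + (1-t)*x*(g0 - s g0)/(x-y) = ((1-t)*x*g0 + (t*x-y)*g1)/(x-y) := by
    rw [hs0]; field_simp; ring
  have hA' : u g0 + (1-t)*y*(g0 - u g0)/(y-z) = ((1-t)*y*g0 + (t*y-z)*g2)/(y-z) := by
    rw [hu0]; field_simp; ring
  rw [hA, hA']
  have hQ : u (((1-t)*x*g0 + (t*x-y)*g1)/(x-y)) = ((1-t)*x*g2 + (t*x-z)*g21)/(x-z) := by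
    rw [map_div₀]
    simp only [map_add, map_sub, map_mul, map_one, hux, huy, hut, hu0, hu1]
  have hQ' : s (((1-t)*y*g0 + (t*y-z)*g2)/(y-z)) = ((1-t)*x*g1 + (t*x-z)*g12)/(x-z) := by
    rw [map_div₀]
    simp only [map_add, map_sub, map_mul, map_one, hsx, hsy, hsz, hst, hs0, hs2]
  rw [hQ, hQ']
  have hB : (((1-t)*x*g2 + (t*x-z)*g21)/(x-z))
      + (1-t)*y*((((1-t)*x*g0 + (t*x-y)*g1)/(x-y)) - (((1-t)*x*g2 + (t*x-z)*g21)/(x-z)))/(y-z)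
      = ((1-t)*y*(x-z)*((1-t)*x*g0 + (t*x-y)*g1)
          + (t*y-z)*(x-y)*((1-t)*x*g2 + (t*x-z)*g21)) / ((x-y)*((x-z)*(y-z))) := by
    field_simp; ring
  have hB' : (((1-t)*x*g1 + (t*x-z)*g12)/(x-z))
      + (1-t)*x*((((1-t)*y*g0 + (t*y-z)*g2)/(y-z)) - (((1-t)*x*g1 + (t*x-z)*g12)/(x-z)))/(x-y)
      = ((1-t)*x*(x-z)*((1-t)*y*g0 + (t*y-z)*g2)
          + (t*x-y)*(y-z)*((1-t)*x*g1 + (t*x-z)*g12)) / ((x-y)*((x-z)*(y-z))) := by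
    field_simp; ring
  rw [hB, hB']
  have hsB : s ((((1-t)*y*(x-z)*((1-t)*x*g0 + (t*x-y)*g1)
          + (t*y-z)*(x-y)*((1-t)*x*g2 + (t*x-z)*g21))) / ((x-y)*((x-z)*(y-z))))
      = (((1-t)*x*(y-z)*((1-t)*y*g1 + (t*y-x)*g0)
          + (t*x-z)*(y-x)*((1-t)*y*g12 + (t*y-z)*g121))) / ((y-x)*((y-z)*(x-z))) := by
    rw [map_div₀]
    simp only [map_add, map_sub, map_mul, map_one, hsx, hsy, hsz, hst, hs0, hs1, hs2, hs21]
  have huB : u ((((1-t)*x*(x-z)*((1-t)*y*g0 + (t*y-z)*g2)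
          + (t*x-y)*(y-z)*((1-t)*x*g1 + (t*x-z)*g12))) / ((x-y)*((x-z)*(y-z))))
      = (((1-t)*x*(x-y)*((1-t)*z*g2 + (t*z-y)*g0)
          + (t*x-z)*(z-y)*((1-t)*x*g21 + (t*x-y)*g121))) / ((x-z)*((x-y)*(z-y))) := by
    rw [map_div₀]
    simp only [map_add, map_sub, map_mul, map_one, hux, huy, huz, hut, hu0, hu1, hu2, hu12]
  rw [hsB, huB]
  have hsB2 : (((1-t)*x*(y-z)*((1-t)*y*g1 + (t*y-x)*g0)
          + (t*x-z)*(y-x)*((1-t)*y*g12 + (t*y-z)*g121))) / ((y-x)*((y-z)*(x-z)))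
      = (-((1-t)*x*(y-z)*((1-t)*y*g1 + (t*y-x)*g0)
          + (t*x-z)*(y-x)*((1-t)*y*g12 + (t*y-z)*g121))) / ((x-y)*((x-z)*(y-z))) := by
    rw [div_eq_div_iff (mul_ne_zero hyx (mul_ne_zero hyz hxz)) hD]; ring
  have huB2 : (((1-t)*x*(x-y)*((1-t)*z*g2 + (t*z-y)*g0)
          + (t*x-z)*(z-y)*((1-t)*x*g21 + (t*x-y)*g121))) / ((x-z)*((x-y)*(z-y)))
      = (-((1-t)*x*(x-y)*((1-t)*z*g2 + (t*z-y)*g0)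
          + (t*x-z)*(z-y)*((1-t)*x*g21 + (t*x-y)*g121))) / ((x-y)*((x-z)*(y-z))) := by
    rw [div_eq_div_iff (mul_ne_zero hxz (mul_ne_zero hxy hzy)) hD]; ring
  rw [hsB2, huB2]
  have collapseL : ∀ n m : K, (-m)/((x-y)*((x-z)*(y-z)))
      + (1-t)*x*(n/((x-y)*((x-z)*(y-z))) - (-m)/((x-y)*((x-z)*(y-z))))/(x-y)
      = ((1-t)*x*n + (y-t*x)*m)/(((x-y)*((x-z)*(y-z)))*(x-y)) := by
    intro n m; field_simp; ring
  have collapseR : ∀ n m : K, (-m)/((x-y)*((x-z)*(y-z)))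
      + (1-t)*y*(n/((x-y)*((x-z)*(y-z))) - (-m)/((x-y)*((x-z)*(y-z))))/(y-z)
      = ((1-t)*y*n + (z-t*y)*m)/(((x-y)*((x-z)*(y-z)))*(y-z)) := by
    intro n m; field_simp; ring
  rw [collapseL, collapseR]
  rw [div_eq_div_iff (mul_ne_zero hD hxy) (mul_ne_zero hD hyz)]
  have key : ((1-t)*x*((1-t)*y*(x-z)*((1-t)*x*g0 + (t*x-y)*g1)
          + (t*y-z)*(x-y)*((1-t)*x*g2 + (t*x-z)*g21))
        + (y-t*x)*((1-t)*x*(y-z)*((1-t)*y*g1 + (t*y-x)*g0)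
          + (t*x-z)*(y-x)*((1-t)*y*g12 + (t*y-z)*g121))) * (y-z)
      = ((1-t)*y*((1-t)*x*(x-z)*((1-t)*y*g0 + (t*y-z)*g2)
          + (t*x-y)*(y-z)*((1-t)*x*g1 + (t*x-z)*g12))
        + (z-t*y)*((1-t)*x*(x-y)*((1-t)*z*g2 + (t*z-y)*g0)
          + (t*x-z)*(z-y)*((1-t)*x*g21 + (t*x-y)*g121))) * (x-y) := by
    ring
  rw [mul_comm ((x-y)*((x-z)*(y-z))) (y-z), mul_comm ((x-y)*((x-z)*(y-z))) (x-y),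
    ← mul_assoc, ← mul_assoc, key, mul_assoc, mul_assoc]

lemma swapK_toK {N : ℕ} (i j : Fin N) (p : MvPolynomial (Fin N) Ft) :
    swapK i j (toK p) = toK (rename (Equiv.swap i j) p) :=
  IsFractionRing.lift_algebraMap _ _

lemma swapK_XV {N : ℕ} (i j k : Fin N) : swapK i j (XV k) = XV (Equiv.swap i j k) := by
  rw [show XV k = toK (X k) from rfl, swapK_toK, rename_X]; rfl

lemma XV_sub_ne {N : ℕ} {a b : Fin N} (h : a ≠ b) : XV a - XV b ≠ (0 : KK N) := by
  rw [sub_ne_zero]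
  intro hab
  exact h (X_injective (IsFractionRing.injective (MvPolynomial (Fin N) Ft) (KK N) hab))

set_option linter.unnecessarySimpa false in
/-- braid relation for the Demazure–Lusztig operators:
`T_i (T_{i+1} (T_i f)) = T_{i+1} (T_i (T_{i+1} f))` for every polynomial `f`
in `x_1, …, x_N` over `ℚ(t)` (indices 0-based, so `i + 2 < N`). -/
theorem heckeT_braid (N i : ℕ) (hi : i + 2 < N)
    (f : MvPolynomial (Fin N) Ft) :
    TT ⟨i, by omega⟩ ⟨i + 1, by omega⟩
        (TT ⟨i + 1, by omega⟩ ⟨i + 2, hi⟩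
          (TT ⟨i, by omega⟩ ⟨i + 1, by omega⟩ (toK f))) =
      TT ⟨i + 1, by omega⟩ ⟨i + 2, hi⟩
        (TT ⟨i, by omega⟩ ⟨i + 1, by omega⟩
          (TT ⟨i + 1, by omega⟩ ⟨i + 2, hi⟩ (toK f))) := by
  set a : Fin N := ⟨i, by omega⟩ with ha
  set b : Fin N := ⟨i + 1, by omega⟩ with hb
  set c : Fin N := ⟨i + 2, hi⟩ with hc
  have hab : a ≠ b := fun h => by simpa [ha, hb, Fin.ext_iff] using h
  have hbc : b ≠ c := fun h => by simpa [hb, hc, Fin.ext_iff] using h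
  have hac : a ≠ c := fun h => by simpa [ha, hc, Fin.ext_iff] using h
  set σ : Equiv.Perm (Fin N) := Equiv.swap a b with hσ
  set τ : Equiv.Perm (Fin N) := Equiv.swap b c with hτ
  have hσσ : (⇑σ ∘ ⇑σ) = id := by funext k; simp [hσ, Equiv.swap_apply_self]
  have hττ : (⇑τ ∘ ⇑τ) = id := by funext k; simp [hτ, Equiv.swap_apply_self]
  have hP : τ * σ * τ = σ * τ * σ := by
    have h1 : τ * σ * τ = Equiv.swap c a := Equiv.swap_mul_swap_mul_swap hab hac
    have h2 : σ * τ * σ = Equiv.swap c a := by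
      rw [hσ, hτ, Equiv.swap_comm a b, Equiv.swap_comm b c,
        Equiv.swap_mul_swap_mul_swap hbc.symm hac.symm, Equiv.swap_comm]
    rw [h1, h2]
  have e5 : (⇑τ ∘ ⇑σ ∘ ⇑τ) = (⇑σ ∘ ⇑τ ∘ ⇑σ) := by
    funext k
    simpa [Equiv.Perm.mul_apply] using DFunLike.congr_fun hP k
  have e1 : (⇑σ ∘ ⇑σ ∘ ⇑τ) = ⇑τ := by funext k; simp [hσ, Equiv.swap_apply_self]
  have e2 : (⇑σ ∘ ⇑σ ∘ ⇑τ ∘ ⇑σ) = (⇑τ ∘ ⇑σ) := by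
    funext k; simp [hσ, Equiv.swap_apply_self]
  have e4 : (⇑τ ∘ ⇑τ ∘ ⇑σ) = ⇑σ := by funext k; simp [hτ, Equiv.swap_apply_self]
  have e6 : (⇑τ ∘ ⇑σ ∘ ⇑τ ∘ ⇑σ) = (⇑σ ∘ ⇑τ) := by
    funext k
    have := congrFun e5 (σ k)
    simp only [Function.comp_apply] at this ⊢
    rw [this, Equiv.swap_apply_self]
  have key := braid_abs (swapK a b) (swapK b c) (XV a) (XV b) (XV c) tp
    (toK f) (toK (rename ⇑σ f)) (toK (rename ⇑τ f))
    (toK (rename (⇑σ ∘ ⇑τ) f)) (toK (rename (⇑τ ∘ ⇑σ) f))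
    (toK (rename (⇑σ ∘ ⇑τ ∘ ⇑σ) f))
    (by rw [swapK_XV]; congr 1; exact Equiv.swap_apply_left a b)
    (by rw [swapK_XV]; congr 1; exact Equiv.swap_apply_right a b)
    (by rw [swapK_XV]; congr 1; exact Equiv.swap_apply_of_ne_of_ne hac.symm hbc.symm)
    (swapK_tp a b)
    (by rw [swapK_XV]; congr 1; exact Equiv.swap_apply_of_ne_of_ne hab hac)
    (by rw [swapK_XV]; congr 1; exact Equiv.swap_apply_left b c)
    (by rw [swapK_XV]; congr 1; exact Equiv.swap_apply_right b c)
    (swapK_tp b c)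
    (swapK_toK a b f)
    (by rw [swapK_toK, rename_rename, ← hσ, hσσ, rename_id, AlgHom.id_apply])
    (by rw [swapK_toK, rename_rename, ← hσ])
    (by rw [swapK_toK, rename_rename, ← hσ, e1])
    (by rw [swapK_toK, rename_rename, ← hσ])
    (by rw [swapK_toK, rename_rename, ← hσ, e2])
    (swapK_toK b c f)
    (by rw [swapK_toK, rename_rename, ← hτ, hττ, rename_id, AlgHom.id_apply])
    (by rw [swapK_toK, rename_rename, ← hτ])
    (by rw [swapK_toK, rename_rename, ← hτ, e4])
    (by rw [swapK_toK, rename_rename, ← hτ, e5])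
    (by rw [swapK_toK, rename_rename, ← hτ, e6])
    (XV_sub_ne hab) (XV_sub_ne hbc) (XV_sub_ne hac)
  simpa only [TT, ← hσ, ← hτ] using key


end
end
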